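/- If f : [0,T] → ℝᴺ is right-continuous and has left limits at every point (cadlag), then the regulator g_f is nondecreasing, right-continuous and has left limits, and consequently Γ(f) is also right-continuous with left limits at every point. -/

import Mathlib

open Set

/-- The coordinate sum `1 · x` of a vector in Euclidean space. -/
noncomputable def sumC {N : ℕ} (x : EuclideanSpace ℝ (Fin N)) : ℝ := ∑ i, x i

/-- The regulator `g_f(t) = sup_{0 ≤ u ≤ t} (θ - 1·f(u))⁻`. -/
noncomputable def reg (N : ℕ) (θ : ℝ) (f : ℝ → EuclideanSpace ℝ (Fin N)) (t : ℝ) : ℝ :=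
  sSup ((fun u => max (sumC (f u) - θ) 0) '' Icc 0 t)

/-- The `N`-th standard basis vector `e_N`. -/
noncomputable def eN (N : ℕ) (hN : 1 ≤ N) : EuclideanSpace ℝ (Fin N) :=
  EuclideanSpace.single ⟨N - 1, by omega⟩ 1

/-- The Skorohod-type reflection map `Γ(f)(t) = f(t) - g_f(t) e_N`. -/
noncomputable def Gam (N : ℕ) (hN : 1 ≤ N) (θ : ℝ) (f : ℝ → EuclideanSpace ℝ (Fin N))
    (t : ℝ) : EuclideanSpace ℝ (Fin N) :=
  f t - reg N θ f t • eN N hN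

/-- The sup norm `‖f‖_T = sup_{t ∈ [0,T]} ‖f(t)‖`. -/
noncomputable def supNorm (N : ℕ) (T : ℝ) (f : ℝ → EuclideanSpace ℝ (Fin N)) : ℝ :=
  sSup ((fun t => ‖f t‖) '' Icc 0 T)

open Filter
open Topology

private lemma bdd_of_cadlag (h : ℝ → ℝ) (T : ℝ)
    (hrc : ∀ t ∈ Ico (0:ℝ) T, Tendsto h (nhdsWithin t (Ioi t)) (nhds (h t)))
    (hll : ∀ t ∈ Ioc (0:ℝ) T, ∃ L, Tendsto h (nhdsWithin t (Iio t)) (nhds L)) :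
    ∃ M, ∀ u ∈ Icc (0:ℝ) T, h u ≤ M := by
  refine isCompact_Icc.induction_on (p := fun s => ∃ M, ∀ u ∈ s, h u ≤ M)
    ⟨0, by simp⟩ (fun s t hst ⟨M, hM⟩ => ⟨M, fun u hu => hM u (hst hu)⟩)
    (fun s t ⟨M1, h1⟩ ⟨M2, h2⟩ => ⟨max M1 M2, fun u hu => hu.elim
      (fun hu => (h1 u hu).trans (le_max_left _ _))
      (fun hu => (h2 u hu).trans (le_max_right _ _))⟩) (fun x hx => ?_)
  suffices hev : ∃ M, ∀ᶠ u in 𝓝[Icc (0:ℝ) T] x, h u ≤ M by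
    obtain ⟨M, hM⟩ := hev
    exact ⟨{u | h u ≤ M}, hM, M, fun u hu => hu⟩
  obtain ⟨M1, hM1⟩ : ∃ M1, ∀ᶠ u in 𝓝[Icc (0:ℝ) T ∩ Iio x] x, h u ≤ M1 := by
    rcases eq_or_lt_of_le hx.1 with h0 | h0
    · have he : Icc (0:ℝ) T ∩ Iio x = ∅ := by
        rw [← h0]; ext u
        simp only [mem_inter_iff, mem_Icc, mem_Iio, mem_empty_iff_false, iff_false]
        rintro ⟨⟨h1, _⟩, h2⟩; linarith
      exact ⟨0, by simp [he]⟩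
    · obtain ⟨L, hL⟩ := hll x ⟨h0, hx.2⟩
      exact ⟨L + 1, (hL.eventually_le_const (lt_add_one L)).filter_mono
        (nhdsWithin_mono _ inter_subset_right)⟩
  obtain ⟨M3, hM3⟩ : ∃ M3, ∀ᶠ u in 𝓝[Icc (0:ℝ) T ∩ Ioi x] x, h u ≤ M3 := by
    rcases eq_or_lt_of_le hx.2 with h0 | h0
    · have he : Icc (0:ℝ) T ∩ Ioi x = ∅ := by
        rw [h0]; ext u
        simp only [mem_inter_iff, mem_Icc, mem_Ioi, mem_empty_iff_false, iff_false]
        rintro ⟨⟨_, h1⟩, h2⟩; linarith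
      exact ⟨0, by simp [he]⟩
    · exact ⟨h x + 1, ((hrc x ⟨hx.1, h0⟩).eventually_le_const (lt_add_one _)).filter_mono
        (nhdsWithin_mono _ inter_subset_right)⟩
  have hM2 : ∀ᶠ u in 𝓝[Icc (0:ℝ) T ∩ {x}] x, h u ≤ h x := by
    refine Eventually.filter_mono (nhdsWithin_mono _ inter_subset_right) ?_
    rw [nhdsWithin_singleton]; exact eventually_pure.2 le_rfl
  refine ⟨max M1 (max (h x) M3), ?_⟩
  have hdecomp : Icc (0:ℝ) T =
      (Icc 0 T ∩ Iio x) ∪ ((Icc 0 T ∩ {x}) ∪ (Icc 0 T ∩ Ioi x)) := by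
    ext u
    simp only [mem_union, mem_inter_iff, mem_Iio, mem_singleton_iff, mem_Ioi]
    constructor
    · intro hu; rcases lt_trichotomy u x with hc | hc | hc <;> tauto
    · tauto
  rw [hdecomp, nhdsWithin_union, nhdsWithin_union, eventually_sup, eventually_sup]
  exact ⟨hM1.mono fun u hu => hu.trans (le_max_left _ _),
    hM2.mono fun u hu => hu.trans ((le_max_left _ _).trans (le_max_right _ _)),
    hM3.mono fun u hu => hu.trans ((le_max_right _ _).trans (le_max_right _ _))⟩


private lemma reg_props (h : ℝ → ℝ) (T M : ℝ) (hpos : ∀ u, 0 ≤ h u)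
    (hM : ∀ u ∈ Icc (0:ℝ) T, h u ≤ M)
    (hrc : ∀ t ∈ Ico (0:ℝ) T, Tendsto h (𝓝[>] t) (𝓝 (h t))) :
    MonotoneOn (fun t => sSup (h '' Icc 0 t)) (Icc 0 T) ∧
    (∀ t ∈ Ico (0:ℝ) T, Tendsto (fun t => sSup (h '' Icc 0 t)) (𝓝[>] t)
      (𝓝 (sSup (h '' Icc 0 t)))) ∧
    (∀ t ∈ Ioc (0:ℝ) T, ∃ L, Tendsto (fun t => sSup (h '' Icc 0 t)) (𝓝[<] t) (𝓝 L)) := by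
  set G : ℝ → ℝ := fun t => sSup (h '' Icc 0 t) with hG
  have hbdd : ∀ t ≤ T, BddAbove (h '' Icc 0 t) := by
    intro t ht
    exact ⟨M, by rintro _ ⟨u, hu, rfl⟩; exact hM u ⟨hu.1, hu.2.trans ht⟩⟩
  have hne : ∀ t, 0 ≤ t → (h '' Icc 0 t).Nonempty :=
    fun t ht => ⟨h 0, mem_image_of_mem _ ⟨le_refl 0, ht⟩⟩
  have hmono : ∀ s t, 0 ≤ s → s ≤ t → t ≤ T → G s ≤ G t := fun s t hs hst htT =>
    csSup_le_csSup (hbdd t htT) (hne s hs) (image_mono (Icc_subset_Icc_right hst))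
  have hGnonneg : ∀ t, 0 ≤ t → t ≤ T → 0 ≤ G t := fun t h1 h2 =>
    (hpos 0).trans (le_csSup (hbdd t h2) (mem_image_of_mem _ ⟨le_rfl, h1⟩))
  have hneg : ∀ t, t < (0:ℝ) → G t = 0 := by
    intro t ht
    simp only [hG, Icc_eq_empty (not_le.2 ht), image_empty, Real.sSup_empty]
  refine ⟨fun s hs t ht hst => hmono s t hs.1 hst ht.2, fun t ht => ?_, fun t ht => ?_⟩
  · -- right continuity at t ∈ Ico 0 T
    have hht : h t ≤ G t := le_csSup (hbdd t ht.2.le) (mem_image_of_mem _ ⟨ht.1, le_rfl⟩)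
    refine tendsto_order.2 ⟨fun a ha => ?_, fun a ha => ?_⟩
    · filter_upwards [Ioo_mem_nhdsGT ht.2] with u hu
      exact ha.trans_le (hmono t u ht.1 hu.1.le hu.2.le)
    · set a' := (G t + a) / 2 with ha'
      have h1 : G t < a' := by rw [ha']; linarith
      have h2 : a' < a := by rw [ha']; linarith
      have hev : ∀ᶠ u in 𝓝[>] t, h u < a' :=
        (hrc t ht).eventually_lt_const (lt_of_le_of_lt hht h1)
      obtain ⟨b, hb, hsub⟩ := mem_nhdsGT_iff_exists_Ioo_subset.1 hev
      filter_upwards [Ioo_mem_nhdsGT ht.2, Ioo_mem_nhdsGT hb]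
        with u hu1 hu2
      have hbdd2 : BddAbove (h '' Ioc t u) :=
        ⟨a', by rintro _ ⟨v, hv, rfl⟩; exact (hsub ⟨hv.1, lt_of_le_of_lt hv.2 hu2.2⟩).le⟩
      have hne2 : (h '' Ioc t u).Nonempty := ⟨h u, mem_image_of_mem _ ⟨hu1.1, le_rfl⟩⟩
      have hGu : G u = max (G t) (sSup (h '' Ioc t u)) := by
        show sSup (h '' Icc 0 u) = max (sSup (h '' Icc 0 t)) (sSup (h '' Ioc t u))
        rw [show h '' Icc 0 u = h '' Icc 0 t ∪ h '' Ioc t u by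
          rw [← image_union, Icc_union_Ioc_eq_Icc ht.1 hu1.1.le]]
        exact csSup_union (hbdd t ht.2.le) (hne t ht.1) hbdd2 hne2
      rw [hGu]
      refine max_lt ha (lt_of_le_of_lt (csSup_le hne2 ?_) h2)
      rintro _ ⟨v, hv, rfl⟩
      exact (hsub ⟨hv.1, lt_of_le_of_lt hv.2 hu2.2⟩).le
  · -- left limit at t ∈ Ioc 0 T
    refine ⟨_, MonotoneOn.tendsto_nhdsLT ?_ ?_⟩
    · intro s hs u hu hsu
      rcases lt_or_ge u 0 with hu0 | hu0
      · rw [hneg s (lt_of_le_of_lt hsu hu0), hneg u hu0]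
      · rcases lt_or_ge s 0 with hs0 | hs0
        · rw [hneg s hs0]; exact hGnonneg u hu0 (le_of_lt (lt_of_lt_of_le hu ht.2))
        · exact hmono s u hs0 hsu (le_of_lt (lt_of_lt_of_le hu ht.2))
    · refine ⟨max M 0, ?_⟩
      rintro _ ⟨u, hu, rfl⟩
      show G u ≤ max M 0
      rcases lt_or_ge u 0 with hu0 | hu0
      · rw [hneg u hu0]; exact le_max_right _ _
      · refine le_trans (csSup_le (hne u hu0) ?_) (le_max_left _ _)
        rintro _ ⟨v, hv, rfl⟩
        exact hM v ⟨hv.1, hv.2.trans (le_of_lt (lt_of_lt_of_le hu ht.2))⟩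


/-- If `f` is cadlag on `[0,T]` (right-continuous on `[0,T)` with left limits on `(0,T]`),
then the regulator `g_f` is nondecreasing, right-continuous with left limits, and consequently
`Γ(f)` is also right-continuous with left limits. -/
theorem gamma_cadlag (N : ℕ) (hN : 1 ≤ N) (θ T : ℝ) (hT : 0 < T)
    (f : ℝ → EuclideanSpace ℝ (Fin N))
    (hrc : ∀ t ∈ Ico (0:ℝ) T, Tendsto f (nhdsWithin t (Ioi t)) (nhds (f t)))
    (hll : ∀ t ∈ Ioc (0:ℝ) T, ∃ L, Tendsto f (nhdsWithin t (Iio t)) (nhds L)) :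
    MonotoneOn (reg N θ f) (Icc 0 T) ∧
    (∀ t ∈ Ico (0:ℝ) T,
      Tendsto (reg N θ f) (nhdsWithin t (Ioi t)) (nhds (reg N θ f t))) ∧
    (∀ t ∈ Ioc (0:ℝ) T, ∃ L : ℝ, Tendsto (reg N θ f) (nhdsWithin t (Iio t)) (nhds L)) ∧
    (∀ t ∈ Ico (0:ℝ) T,
      Tendsto (Gam N hN θ f) (nhdsWithin t (Ioi t)) (nhds (Gam N hN θ f t))) ∧
    (∀ t ∈ Ioc (0:ℝ) T, ∃ L : EuclideanSpace ℝ (Fin N),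
      Tendsto (Gam N hN θ f) (nhdsWithin t (Iio t)) (nhds L)) := by
  set h : ℝ → ℝ := fun u => max (sumC (f u) - θ) 0 with hh
  have hφ : Continuous (fun x : EuclideanSpace ℝ (Fin N) => max (sumC x - θ) 0) := by
    refine Continuous.max (Continuous.sub ?_ continuous_const) continuous_const
    unfold sumC; exact continuous_finset_sum _ fun i _ => PiLp.continuous_apply 2 _ i
  have hh_rc : ∀ t ∈ Ico (0:ℝ) T, Tendsto h (𝓝[>] t) (𝓝 (h t)) := fun t ht =>
    ((hφ.tendsto (f t)).comp (hrc t ht))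
  have hh_ll : ∀ t ∈ Ioc (0:ℝ) T, ∃ L, Tendsto h (𝓝[<] t) (𝓝 L) := by
    intro t ht
    obtain ⟨L, hL⟩ := hll t ht
    exact ⟨max (sumC L - θ) 0, (hφ.tendsto L).comp hL⟩
  have hpos : ∀ u, 0 ≤ h u := fun u => le_max_right _ _
  obtain ⟨M, hM⟩ := bdd_of_cadlag h T hh_rc hh_ll
  obtain ⟨P1, P2, P3⟩ := reg_props h T M hpos hM hh_rc
  have hregeq : reg N θ f = fun t => sSup (h '' Icc 0 t) := rfl
  rw [hregeq]
  refine ⟨P1, P2, P3, fun t ht => ?_, fun t ht => ?_⟩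
  · have := (hrc t ht).sub ((P2 t ht).smul_const (eN N hN))
    exact this
  · obtain ⟨Lf, hLf⟩ := hll t ht
    obtain ⟨Lg, hLg⟩ := P3 t ht
    exact ⟨Lf - Lg • eN N hN, hLf.sub (hLg.smul_const (eN N hN))⟩
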